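/- For any Boolean function f with nonzero sensitivity, there is a public coin strategy for the single-bit certificate game winning with probability at least 1/(e²·s(f)) on every sensitive pair; hence CG^pub_[1](f) ≤ e²·s(f). -/

import Mathlib

open Finset

/-- Sensitivity of a total Boolean function. -/
def sensT {n : ℕ} (f : (Fin n → Bool) → Bool) : ℕ :=
  univ.sup (fun x : Fin n → Bool =>
    (univ.filter (fun i => f (Function.update x i (!x i)) ≠ f x)).card)

lemma pow_ratio_le_exp (s : ℕ) (hs : 2 ≤ s) :
    ((s : ℝ) / ((s:ℝ) - 1)) ^ (s - 1) ≤ Real.exp 1 := by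
  have h1 : (1:ℝ) ≤ (s:ℝ) - 1 := by
    have : (2:ℝ) ≤ (s:ℝ) := by exact_mod_cast hs
    linarith
  have hpos : (0:ℝ) < (s:ℝ) - 1 := by linarith
  have hx : (0:ℝ) < (s:ℝ) / ((s:ℝ) - 1) := by positivity
  have hxp : (0:ℝ) < ((s:ℝ) / ((s:ℝ) - 1)) ^ (s - 1) := by positivity
  have hlog : Real.log ((s:ℝ) / ((s:ℝ)-1)) ≤ 1 / ((s:ℝ)-1) := by
    have heq : (s:ℝ) / ((s:ℝ)-1) - 1 = 1 / ((s:ℝ)-1) := by field_simp; ring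
    linarith [Real.log_le_sub_one_of_pos hx]
  have hcast : ((s - 1 : ℕ) : ℝ) = (s:ℝ) - 1 := by
    have h1n : 1 ≤ s := by omega
    push_cast [h1n]; ring
  rw [← Real.log_le_iff_le_exp hxp, Real.log_pow, hcast]
  calc ((s:ℝ) - 1) * Real.log ((s:ℝ) / ((s:ℝ)-1))
      ≤ ((s:ℝ) - 1) * (1 / ((s:ℝ)-1)) := by
        apply mul_le_mul_of_nonneg_left hlog (by linarith)
    _ = 1 := by field_simp

lemma key_pow_bound (s k : ℕ) (hs : 0 < s) (hk : k ≤ 2 * (s - 1)) :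
    (s:ℝ) ^ k ≤ Real.exp 1 ^ 2 * ((s:ℝ) - 1) ^ k := by
  rcases eq_or_lt_of_le (show 1 ≤ s from hs) with h1 | h2
  · have hk0 : k = 0 := by omega
    subst hk0
    simp only [pow_zero, mul_one]
    have he : (1:ℝ) ≤ Real.exp 1 := Real.one_le_exp zero_le_one
    nlinarith
  · have hs2 : 2 ≤ s := h2
    have hbpos : (0:ℝ) < (s:ℝ) - 1 := by
      have : (2:ℝ) ≤ (s:ℝ) := by exact_mod_cast hs2
      linarith
    have hr1 : (1:ℝ) ≤ (s:ℝ) / ((s:ℝ) - 1) := by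
      rw [le_div_iff₀ hbpos]; linarith
    have h2e : ((s : ℝ) / ((s:ℝ) - 1)) ^ k ≤ Real.exp 1 ^ 2 := by
      calc ((s : ℝ) / ((s:ℝ) - 1)) ^ k
          ≤ ((s : ℝ) / ((s:ℝ) - 1)) ^ (2 * (s-1)) := pow_le_pow_right₀ hr1 hk
        _ = (((s : ℝ) / ((s:ℝ) - 1)) ^ (s-1)) ^ 2 := by
            rw [← pow_mul, Nat.mul_comm]
        _ ≤ Real.exp 1 ^ 2 := by
            apply pow_le_pow_left₀ (by positivity) (pow_ratio_le_exp s hs2)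
    have := mul_le_mul_of_nonneg_right h2e (le_of_lt (pow_pos hbpos k))
    rw [div_pow, div_mul_eq_mul_div, mul_div_assoc, div_self (by positivity), mul_one] at this
    linarith

/-- The deterministic strategy induced by a hash `h`: output the smallest sensitive
index (according to `S`) hashing to `z0`, or a default. -/
def pick {n s : ℕ} (hn : 0 < n) (S : (Fin n → Bool) → Finset (Fin n))
    (h : Fin n → Fin s) (z0 : Fin s) (x : Fin n → Bool) : Fin n :=
  if hne : ((S x).filter (fun j => h j = z0)).Nonempty
  then ((S x).filter (fun j => h j = z0)).min' hne else ⟨0, hn⟩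

lemma pick_eq {n s : ℕ} (hn : 0 < n) (S : (Fin n → Bool) → Finset (Fin n))
    (h : Fin n → Fin s) (z0 : Fin s) (x : Fin n → Bool) (i : Fin n)
    (hi : i ∈ S x) (hz : h i = z0)
    (huniq : ∀ j ∈ S x, h j = z0 → j = i) : pick hn S h z0 x = i := by
  have hfil : (S x).filter (fun j => h j = z0) = {i} := by
    ext j
    simp only [mem_filter, mem_singleton]
    constructor
    · rintro ⟨hj, hjz⟩; exact huniq j hj hjz
    · rintro rfl; exact ⟨hi, hz⟩
  have hne : ((S x).filter (fun j => h j = z0)).Nonempty := by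
    rw [hfil]; exact ⟨i, mem_singleton_self i⟩
  rw [pick, dif_pos hne]
  simp [hfil]

/-- Upper bound `CG^pub_[1](f) ≤ e²·s(f)`: there is a public coin strategy (a distribution
over pairs of deterministic strategies) for the single-bit certificate game winning with
probability at least `1/(e²·s(f))` on every sensitive pair `(x, x^(i))` with `f(x)=0`,
`f(x^(i))=1`. -/
theorem stmt_12 {n : ℕ} (f : (Fin n → Bool) → Bool) (hs : 0 < sensT f) :
    ∃ p : (((Fin n → Bool) → Fin n) × ((Fin n → Bool) → Fin n)) → ℝ,
      (∀ AB, 0 ≤ p AB) ∧ (∑ AB, p AB = 1) ∧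
      ∀ x i, f x = false → f (Function.update x i (!x i)) = true →
        1 / (Real.exp 1 ^ 2 * (sensT f : ℝ)) ≤
          ∑ AB ∈ univ.filter
            (fun AB : ((Fin n → Bool) → Fin n) × ((Fin n → Bool) → Fin n) =>
              AB.1 x = i ∧ AB.2 (Function.update x i (!x i)) = i), p AB := by
  classical
  set s := sensT f with hsdef
  haveI : NeZero s := ⟨hs.ne'⟩
  have hn : 0 < n := by
    rcases Nat.eq_zero_or_pos n with h0 | h
    · exfalso
      subst h0
      have : sensT f = 0 := by
        rw [sensT]
        apply Nat.le_zero.mp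
        apply Finset.sup_le
        intro x _
        simp [Finset.eq_empty_of_isEmpty]
      omega
    · exact h
  set S : (Fin n → Bool) → Finset (Fin n) :=
    fun x => univ.filter (fun j => f (Function.update x j (!x j)) ≠ f x) with hSdef
  have hScard : ∀ x, (S x).card ≤ s := by
    intro x
    rw [hsdef, sensT]
    exact Finset.le_sup (f := fun x : Fin n → Bool =>
      (univ.filter (fun j => f (Function.update x j (!x j)) ≠ f x)).card) (mem_univ x)
  set A : (Fin n → Fin s) → (Fin n → Bool) → Fin n :=
    fun h => pick hn S h 0 with hAdef
  set p : (((Fin n → Bool) → Fin n) × ((Fin n → Bool) → Fin n)) → ℝ := fun AB =>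
    ((univ.filter (fun h : Fin n → Fin s => (A h, A h) = AB)).card : ℝ) / ((s:ℝ) ^ n)
    with hpdef
  have hNpos : (0:ℝ) < (s:ℝ) ^ n := by positivity
  refine ⟨p, ?_, ?_, ?_⟩
  · intro AB
    apply div_nonneg (by positivity) (le_of_lt hNpos)
  · rw [← Finset.sum_div, div_eq_one_iff_eq (ne_of_gt hNpos)]
    have hcount := Finset.card_eq_sum_card_fiberwise
      (f := fun h : Fin n → Fin s => (A h, A h)) (s := univ) (t := univ)
      (fun x _ => mem_univ _)
    calc ∑ AB, ((univ.filter (fun h : Fin n → Fin s => (A h, A h) = AB)).card : ℝ)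
        = ((∑ AB, (univ.filter (fun h : Fin n → Fin s => (A h, A h) = AB)).card : ℕ) : ℝ) := by
          push_cast; rfl
      _ = ((univ : Finset (Fin n → Fin s)).card : ℝ) := by rw [← hcount]
      _ = (s:ℝ)^n := by simp
  · intro x i hx0 hy1
    set y := Function.update x i (!x i) with hydef
    have hyi : y i = !x i := Function.update_self i (!x i) x
    have hyx : Function.update y i (!y i) = x := by
      rw [hyi, Bool.not_not, hydef, Function.update_idem, Function.update_eq_self]
    have hiSx : i ∈ S x := by
      rw [hSdef]
      simp only [mem_filter, mem_univ, true_and]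
      rw [← hydef, hy1, hx0]; simp
    have hiSy : i ∈ S y := by
      rw [hSdef]
      simp only [mem_filter, mem_univ, true_and]
      rw [hyx, hx0, hy1]; simp
    set T : Finset (Fin n) := S x ∪ S y with hTdef
    have hiT : i ∈ T := mem_union_left _ hiSx
    set t := T.card with htdef
    have ht1 : 1 ≤ t := Finset.card_pos.mpr ⟨i, hiT⟩
    have htn : t ≤ n := by
      have := Finset.card_le_univ T
      simpa using this
    have ht2s : t + 1 ≤ 2 * s := by
      have hinter : 1 ≤ (S x ∩ S y).card :=
        Finset.card_pos.mpr ⟨i, mem_inter.mpr ⟨hiSx, hiSy⟩⟩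
      have hUI : T.card + (S x ∩ S y).card = (S x).card + (S y).card := by
        rw [hTdef]; exact Finset.card_union_add_card_inter _ _
      have h1 := hScard x
      have h2 := hScard y
      omega
    -- the event set
    set C : Fin n → Finset (Fin s) :=
      fun j => if j = i then {0} else if j ∈ T then {0}ᶜ else univ with hCdef
    set E := Fintype.piFinset C with hEdef
    have hEsub : E ⊆ univ.filter (fun h : Fin n → Fin s => A h x = i ∧ A h y = i) := by
      intro h hh
      rw [hEdef, Fintype.mem_piFinset] at hh
      have hhi : h i = 0 := by
        have := hh i
        simp only [hCdef, if_pos rfl, mem_singleton] at this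
        exact this
      have hhj : ∀ j ∈ T, j ≠ i → h j ≠ 0 := by
        intro j hj hji
        have := hh j
        simp only [hCdef, if_neg hji, if_pos hj, mem_compl, mem_singleton] at this
        exact this
      have hwin : ∀ z : Fin n → Bool, i ∈ S z → S z ⊆ T → A h z = i := by
        intro z hiz hzT
        rw [hAdef]
        apply pick_eq hn S h 0 z i hiz hhi
        intro j hj hjz
        by_contra hji
        exact hhj j (hzT hj) hji hjz
      rw [mem_filter]
      exact ⟨mem_univ _, hwin x hiSx (subset_union_left),
        hwin y hiSy (subset_union_right)⟩
    -- count the event set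
    have hEcard : E.card = (s-1)^(t-1) * s^(n-t) := by
      rw [hEdef, Fintype.card_piFinset]
      have hCi : (C i).card = 1 := by rw [hCdef]; simp
      have step1 : ∏ j, (C j).card = (∏ j ∈ T, (C j).card) * ∏ j ∈ Tᶜ, (C j).card :=
        (Finset.prod_mul_prod_compl T _).symm
      have step2 : ∏ j ∈ T, (C j).card = (C i).card * ∏ j ∈ T.erase i, (C j).card :=
        (Finset.mul_prod_erase T _ hiT).symm
      have step3 : ∏ j ∈ T.erase i, (C j).card = (s-1)^(t-1) := by
        have hall : ∀ j ∈ T.erase i, (C j).card = s - 1 := by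
          intro j hj
          have hji : j ≠ i := Finset.ne_of_mem_erase hj
          have hjT : j ∈ T := Finset.mem_of_mem_erase hj
          rw [hCdef]
          simp only [if_neg hji, if_pos hjT]
          rw [Finset.card_compl]
          simp
        rw [Finset.prod_congr rfl hall, Finset.prod_const,
          Finset.card_erase_of_mem hiT]
      have step4 : ∏ j ∈ Tᶜ, (C j).card = s^(n-t) := by
        have hall : ∀ j ∈ Tᶜ, (C j).card = s := by
          intro j hj
          rw [Finset.mem_compl] at hj
          have hji : j ≠ i := fun he => hj (he ▸ hiT)
          rw [hCdef]
          simp [if_neg hji, if_neg hj]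
        rw [Finset.prod_congr rfl hall, Finset.prod_const, Finset.card_compl]
        congr 1
        simp [htdef]
      rw [step1, step2, step3, step4, hCi, one_mul]
    -- put everything together
    have hsum : ∑ AB ∈ univ.filter
        (fun AB : (((Fin n → Bool) → Fin n) × ((Fin n → Bool) → Fin n)) =>
          AB.1 x = i ∧ AB.2 y = i), p AB
        = ((univ.filter (fun h : Fin n → Fin s => A h x = i ∧ A h y = i)).card : ℝ)
            / (s:ℝ)^n := by
      rw [← Finset.sum_div]
      congr 1
      rw [← Nat.cast_sum]
      congr 1
      have hfib := Finset.card_eq_sum_card_fiberwise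
        (f := fun h : Fin n → Fin s => (A h, A h))
        (s := univ.filter (fun h : Fin n → Fin s => A h x = i ∧ A h y = i))
        (t := univ.filter
          (fun AB : (((Fin n → Bool) → Fin n) × ((Fin n → Bool) → Fin n)) =>
            AB.1 x = i ∧ AB.2 y = i)) ?hmap
      · rw [hfib]
        apply Finset.sum_congr rfl
        intro AB hAB
        rw [mem_filter] at hAB
        have hset : (univ.filter (fun h : Fin n → Fin s => A h x = i ∧ A h y = i)).filter
            (fun h => (A h, A h) = AB) = univ.filter (fun h => (A h, A h) = AB) := by
          ext h
          constructor
          · intro hmem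
            rw [mem_filter] at hmem
            rw [mem_filter]
            exact ⟨mem_univ _, hmem.2⟩
          · intro hmem
            rw [mem_filter] at hmem
            have heq : (A h, A h) = AB := hmem.2
            rw [mem_filter]
            refine ⟨mem_filter.mpr ⟨mem_univ _, ?_, ?_⟩, heq⟩
            · have h1 : A h = AB.1 := congrArg Prod.fst heq
              exact h1 ▸ hAB.2.1
            · have h2' : A h = AB.2 := congrArg Prod.snd heq
              exact h2' ▸ hAB.2.2
        rw [hset]
      · intro h hh
        rw [mem_coe, mem_filter] at hh
        rw [mem_coe, mem_filter]
        exact ⟨mem_univ _, hh.2.1, hh.2.2⟩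
    rw [hsum]
    have hcardle : (E.card : ℝ) ≤
        ((univ.filter (fun h : Fin n → Fin s => A h x = i ∧ A h y = i)).card : ℝ) := by
      exact_mod_cast Finset.card_le_card hEsub
    have hb : ((s - 1 : ℕ) : ℝ) = (s:ℝ) - 1 := by
      have h1n : 1 ≤ s := hs
      push_cast [h1n]; ring
    have hbnn : (0:ℝ) ≤ (s:ℝ) - 1 := by
      have : (1:ℝ) ≤ (s:ℝ) := by exact_mod_cast hs
      linarith
    have hEcardR : (E.card : ℝ) = ((s:ℝ)-1)^(t-1) * (s:ℝ)^(n-t) := by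
      rw [hEcard]; push_cast [hb]; ring
    have hsplit : (s:ℝ)^n = (s:ℝ)^t * (s:ℝ)^(n-t) := by
      rw [← pow_add]; congr 1; omega
    have hqeq : (E.card : ℝ) / (s:ℝ)^n = ((s:ℝ)-1)^(t-1) / (s:ℝ)^t := by
      rw [hEcardR, hsplit, mul_div_mul_right _ _ (by positivity : ((s:ℝ))^(n-t) ≠ 0)]
    have hkey := key_pow_bound s (t-1) hs (by omega)
    have hfinal : 1 / (Real.exp 1 ^ 2 * (s : ℝ)) ≤ ((s:ℝ)-1)^(t-1) / (s:ℝ)^t := by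
      rw [div_le_div_iff₀ (by positivity) (by positivity)]
      have htsplit : (s:ℝ)^t = (s:ℝ)^(t-1) * (s:ℝ) := by
        conv_lhs => rw [show t = (t-1)+1 by omega]
        rw [pow_succ]
      rw [one_mul, htsplit]
      have hsp : (0:ℝ) ≤ (s:ℝ) := by positivity
      nlinarith [mul_le_mul_of_nonneg_right hkey hsp]
    calc 1 / (Real.exp 1 ^ 2 * (s : ℝ))
        ≤ ((s:ℝ)-1)^(t-1) / (s:ℝ)^t := hfinal
      _ = (E.card : ℝ) / (s:ℝ)^n := hqeq.symm
      _ ≤ _ := by gcongr
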